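/- The covariant phase POVM E₁ on [0, 2π) defined by E₁(Δ) = (|Δ|/2π)·1 + (1/2π)⟨ψ_s|ψ_t⟩ (∫_Δ e^{i(s−t)x} dx) |s⟩⟨t| + (1/2π)⟨ψ_t|ψ_s⟩ (∫_Δ e^{i(t−s)x} dx) |t⟩⟨s| satisfies ‖E₁(Δ)‖ ≤ (3/2π)|Δ| for every Borel set Δ, so E₁ is absolutely continuous with respect to Lebesgue measure and uniformly continuous, and does not have the norm-1 property. -/

import Mathlib

open MeasureTheory Filter Topology Real

local notation "⟪" x ", " y "⟫" => @inner ℂ _ _ x y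

/-- The rank-one operator `|u⟩⟨v| : x ↦ ⟨v, x⟩ u`. -/
noncomputable def ketBra {H : Type*} [NormedAddCommGroup H] [InnerProductSpace ℂ H]
    (u v : H) : H →L[ℂ] H :=
  ContinuousLinearMap.smulRight (innerSL ℂ v) u

lemma ketBra_norm_le {H : Type*} [NormedAddCommGroup H] [InnerProductSpace ℂ H]
    (u v : H) : ‖ketBra u v‖ ≤ ‖u‖ * ‖v‖ := by
  rw [ketBra, ContinuousLinearMap.norm_smulRight_apply, innerSL_apply_norm, mul_comm]

lemma exp_re_zero (a b : ℕ) (x : ℝ) : (Complex.I * ((a:ℂ) - (b:ℂ)) * x).re = 0 := by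
  simp [Complex.mul_re, Complex.mul_im]

lemma exp_integrableOn (a b : ℕ) (Δ : Set ℝ) (hfin : volume Δ < ⊤) :
    IntegrableOn (fun x : ℝ => Complex.exp (Complex.I * ((a:ℂ) - (b:ℂ)) * x)) Δ := by
  apply Integrable.mono' (g := fun _ => (1:ℝ))
  · exact integrableOn_const hfin.ne
  · exact (Complex.continuous_exp.comp (continuous_const.mul Complex.continuous_ofReal)).aestronglyMeasurable.restrict
  · filter_upwards with x
    rw [Complex.norm_exp, exp_re_zero, Real.exp_zero]

/-- the covariant phase POVM
`E₁(Δ) = (|Δ|/2π)·1 + (1/2π)⟨ψ_s|ψ_t⟩(∫_Δ e^{i(s−t)x} dx)|s⟩⟨t| + h.c.`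
satisfies `‖E₁(Δ)‖ ≤ (3/2π)|Δ|`, hence it is absolutely continuous with respect to
Lebesgue measure, uniformly continuous, and it does not have the norm-1 property. -/
theorem phase_povm_absCont_unifCont_not_norm_one
    {H : Type*} [NormedAddCommGroup H] [InnerProductSpace ℂ H] [CompleteSpace H]
    (e : ℕ → H) (he : Orthonormal ℂ e)
    (s t : ℕ) (hst : s ≠ t)
    (ψ : ℕ → H) (hψs : ‖ψ s‖ = 1) (hψt : ‖ψ t‖ = 1)
    (hover : ‖⟪ψ s, ψ t⟫‖ < 1)
    (E₁ : Set ℝ → H →L[ℂ] H)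
    (hE₁ : ∀ Δ : Set ℝ, MeasurableSet Δ → Δ ⊆ Set.Ico 0 (2 * π) →
      E₁ Δ = (((volume Δ).toReal / (2 * π) : ℝ) : ℂ) • (1 : H →L[ℂ] H)
        + ((2 * π : ℂ)⁻¹ * ⟪ψ s, ψ t⟫ *
            ∫ x in Δ, Complex.exp (Complex.I * ((s : ℂ) - (t : ℂ)) * x)) • ketBra (e s) (e t)
        + ((2 * π : ℂ)⁻¹ * ⟪ψ t, ψ s⟫ *
            ∫ x in Δ, Complex.exp (Complex.I * ((t : ℂ) - (s : ℂ)) * x)) • ketBra (e t) (e s)) :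
    (∀ Δ : Set ℝ, MeasurableSet Δ → Δ ⊆ Set.Ico 0 (2 * π) →
      ‖E₁ Δ‖ ≤ 3 / (2 * π) * (volume Δ).toReal) ∧
    (∀ Δ : Set ℝ, MeasurableSet Δ → Δ ⊆ Set.Ico 0 (2 * π) →
      ∀ Δi : ℕ → Set ℝ, (∀ i, MeasurableSet (Δi i)) →
        Pairwise (Function.onFun Disjoint Δi) → (⋃ i, Δi i) = Δ →
        Tendsto (fun n => ∑ i ∈ Finset.range n, E₁ (Δi i)) atTop (𝓝 (E₁ Δ))) ∧
    ¬ (∀ Δ : Set ℝ, MeasurableSet Δ → Δ ⊆ Set.Ico 0 (2 * π) →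
        E₁ Δ ≠ 0 → ‖E₁ Δ‖ = 1) := by
  have hπ : (0:ℝ) < 2 * π := by positivity
  have hfin : ∀ Δ : Set ℝ, Δ ⊆ Set.Ico 0 (2 * π) → volume Δ < ⊤ := fun Δ h =>
    lt_of_le_of_lt (measure_mono h) measure_Ico_lt_top
  -- the key norm bound
  have key : ∀ Δ : Set ℝ, MeasurableSet Δ → Δ ⊆ Set.Ico 0 (2 * π) →
      ‖E₁ Δ‖ ≤ 3 / (2 * π) * (volume Δ).toReal := by
    intro Δ hm hsub
    rw [hE₁ Δ hm hsub]
    have hvol : (0:ℝ) ≤ (volume Δ).toReal := ENNReal.toReal_nonneg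
    have hI : ∀ a b : ℕ,
        ‖∫ x in Δ, Complex.exp (Complex.I * ((a:ℂ) - (b:ℂ)) * x)‖ ≤ (volume Δ).toReal := by
      intro a b
      have := norm_setIntegral_le_of_norm_le_const (μ := volume)
        (f := fun x : ℝ => Complex.exp (Complex.I * ((a:ℂ) - (b:ℂ)) * x))
        (C := 1) (hfin Δ hsub) (fun x _ => by
          rw [Complex.norm_exp, exp_re_zero, Real.exp_zero])
      rw [one_mul] at this; exact this
    have h1 : ‖(((volume Δ).toReal / (2 * π) : ℝ) : ℂ) • (1 : H →L[ℂ] H)‖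
        ≤ (volume Δ).toReal / (2 * π) := by
      rw [norm_smul]
      calc _ ≤ ‖(((volume Δ).toReal / (2 * π) : ℝ) : ℂ)‖ * 1 := by
            gcongr
            exact ContinuousLinearMap.norm_id_le
        _ = |(volume Δ).toReal / (2 * π)| := by rw [mul_one, Complex.norm_real, Real.norm_eq_abs]
        _ = (volume Δ).toReal / (2 * π) := abs_of_nonneg (by positivity)
    have h2 : ∀ a b : ℕ, ‖ψ a‖ = 1 → ‖ψ b‖ = 1 →
        ‖((2 * π : ℂ)⁻¹ * ⟪ψ a, ψ b⟫ *
          ∫ x in Δ, Complex.exp (Complex.I * ((a : ℂ) - (b : ℂ)) * x)) • ketBra (e a) (e b)‖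
        ≤ (volume Δ).toReal / (2 * π) := by
      intro a b ha hb
      rw [norm_smul]
      have hket : ‖ketBra (e a) (e b)‖ ≤ 1 := by
        have := ketBra_norm_le (e a) (e b)
        rw [he.1 a, he.1 b, mul_one] at this
        exact this
      have hinner : ‖⟪ψ a, ψ b⟫‖ ≤ 1 := by
        have := norm_inner_le_norm (𝕜 := ℂ) (ψ a) (ψ b)
        rwa [ha, hb, mul_one] at this
      have hcoef : ‖(2 * π : ℂ)⁻¹ * ⟪ψ a, ψ b⟫ *
          ∫ x in Δ, Complex.exp (Complex.I * ((a : ℂ) - (b : ℂ)) * x)‖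
          ≤ (volume Δ).toReal / (2 * π) := by
        rw [norm_mul, norm_mul, norm_inv]
        have h2π : ‖(2 * π : ℂ)‖ = 2 * π := by
          rw [show (2 * π : ℂ) = ((2 * π : ℝ) : ℂ) by push_cast; ring,
            Complex.norm_real, Real.norm_eq_abs, abs_of_pos hπ]
        rw [h2π]
        calc (2*π)⁻¹ * ‖⟪ψ a, ψ b⟫‖ * ‖∫ x in Δ, Complex.exp (Complex.I * ((a:ℂ)-(b:ℂ)) * x)‖
            ≤ (2*π)⁻¹ * 1 * (volume Δ).toReal := by
              gcongr
              · exact hI a b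
          _ = (volume Δ).toReal / (2*π) := by ring
      calc _ ≤ ((volume Δ).toReal / (2*π)) * 1 := by gcongr
        _ = (volume Δ).toReal / (2*π) := mul_one _
    refine le_trans (norm_add₃_le) ?_
    have h2a := h2 s t hψs hψt
    have h2b := h2 t s hψt hψs
    have h3 : 3 / (2*π) * (volume Δ).toReal
        = (volume Δ).toReal/(2*π) + (volume Δ).toReal/(2*π) + (volume Δ).toReal/(2*π) := by
      ring
    rw [h3]
    gcongr <;> assumption
  -- finite additivity
  have add : ∀ A B : Set ℝ, MeasurableSet A → MeasurableSet B →
      A ⊆ Set.Ico 0 (2*π) → B ⊆ Set.Ico 0 (2*π) → Disjoint A B →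
      E₁ (A ∪ B) = E₁ A + E₁ B := by
    intro A B hA hB hAs hBs hd
    rw [hE₁ A hA hAs, hE₁ B hB hBs, hE₁ (A ∪ B) (hA.union hB) (Set.union_subset hAs hBs)]
    have hvol : (volume (A ∪ B)).toReal = (volume A).toReal + (volume B).toReal := by
      rw [measure_union hd hB, ENNReal.toReal_add (hfin A hAs).ne (hfin B hBs).ne]
    have hint : ∀ a b : ℕ,
        (∫ x in A ∪ B, Complex.exp (Complex.I * ((a:ℂ)-(b:ℂ)) * x))
        = (∫ x in A, Complex.exp (Complex.I * ((a:ℂ)-(b:ℂ)) * x))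
          + ∫ x in B, Complex.exp (Complex.I * ((a:ℂ)-(b:ℂ)) * x) := by
      intro a b
      exact setIntegral_union hd hB (exp_integrableOn a b A (hfin A hAs))
        (exp_integrableOn a b B (hfin B hBs))
    rw [hvol, hint s t, hint t s]
    push_cast
    module
  refine ⟨key, ?_, ?_⟩
  · intro Δ hm hsub Δi hmi hdisj hU
    set U : ℕ → Set ℝ := fun n => ⋃ i ∈ Finset.range n, Δi i with hUdef
    have hUm : ∀ n, MeasurableSet (U n) := fun n =>
      (Finset.range n).measurableSet_biUnion (fun i _ => hmi i)
    have hUsubΔ : ∀ n, U n ⊆ Δ := by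
      intro n x hx
      rw [← hU]
      simp only [hUdef, Set.mem_iUnion] at hx ⊢
      obtain ⟨i, _, hxi⟩ := hx
      exact ⟨i, hxi⟩
    have hUsub : ∀ n, U n ⊆ Set.Ico 0 (2*π) := fun n => (hUsubΔ n).trans hsub
    have hΔisub : ∀ i, Δi i ⊆ Set.Ico 0 (2*π) := by
      intro i
      refine (Set.subset_iUnion Δi i).trans ?_
      rw [hU]; exact hsub
    have hUsucc : ∀ n, U (n+1) = U n ∪ Δi n := by
      intro n
      simp only [hUdef, Finset.range_add_one]
      ext x
      simp only [Set.mem_iUnion, Finset.mem_insert, Finset.mem_range, Set.mem_union]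
      constructor
      · rintro ⟨i, hi | hi, hxi⟩
        · exact Or.inr (hi ▸ hxi)
        · exact Or.inl ⟨i, hi, hxi⟩
      · rintro (⟨i, hi, hxi⟩ | hx)
        · exact ⟨i, Or.inr hi, hxi⟩
        · exact ⟨n, Or.inl rfl, hx⟩
    have hdisjUn : ∀ n, Disjoint (U n) (Δi n) := by
      intro n
      refine Set.disjoint_left.2 ?_
      intro x hx hxn
      simp only [hUdef, Set.mem_iUnion, Finset.mem_range] at hx
      obtain ⟨i, hi, hxi⟩ := hx
      exact Set.disjoint_left.1 (hdisj (Nat.ne_of_lt hi)) hxi hxn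
    have hpart : ∀ n, (∑ i ∈ Finset.range n, E₁ (Δi i)) = E₁ (U n) := by
      intro n
      induction n with
      | zero =>
          simp only [Finset.sum_range_zero]
          have hU0 : U 0 = ∅ := by simp [hUdef]
          rw [hU0, hE₁ ∅ MeasurableSet.empty (Set.empty_subset _)]
          simp
      | succ n ih =>
          rw [Finset.sum_range_succ, ih, hUsucc n,
            add (U n) (Δi n) (hUm n) (hmi n) (hUsub n) (hΔisub n) (hdisjUn n)]
    have hsplit : ∀ n, E₁ Δ = E₁ (U n) + E₁ (Δ \ U n) := by
      intro n
      have h := add (U n) (Δ \ U n) (hUm n) (hm.diff (hUm n)) (hUsub n)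
        ((Set.diff_subset).trans hsub) disjoint_sdiff_self_right
      rwa [Set.union_diff_cancel (hUsubΔ n)] at h
    have hmono : Antitone (fun n => Δ \ U n) := by
      intro m n hmn
      apply Set.diff_subset_diff_right
      intro x hx
      simp only [hUdef, Set.mem_iUnion, Finset.mem_range] at hx ⊢
      obtain ⟨i, hi, hxi⟩ := hx
      exact ⟨i, lt_of_lt_of_le hi hmn, hxi⟩
    have hinter : (⋂ n, Δ \ U n) = ∅ := by
      ext x
      simp only [Set.mem_iInter, Set.mem_empty_iff_false, iff_false, not_forall]
      by_contra hcon
      push_neg at hcon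
      have h : ∀ n, x ∈ Δ \ U n := hcon
      have hxΔ := (h 0).1
      rw [← hU] at hxΔ
      obtain ⟨i, hxi⟩ := Set.mem_iUnion.1 hxΔ
      refine (h (i+1)).2 ?_
      simp only [hUdef, Set.mem_iUnion, Finset.mem_range]
      exact ⟨i, Nat.lt_succ_self i, hxi⟩
    have hten : Tendsto (fun n => volume (Δ \ U n)) atTop (𝓝 0) := by
      have := tendsto_measure_iInter_atTop (μ := volume) (s := fun n => Δ \ U n)
        (fun n => ((hm.diff (hUm n))).nullMeasurableSet) hmono
        ⟨0, (hfin _ ((Set.diff_subset).trans hsub)).ne⟩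
      rwa [Function.comp_def, hinter, measure_empty] at this
    have htenr : Tendsto (fun n => (volume (Δ \ U n)).toReal) atTop (𝓝 0) := by
      have := (ENNReal.tendsto_toReal (by simp)).comp hten
      simpa [Function.comp_def] using this
    rw [tendsto_iff_norm_sub_tendsto_zero]
    apply squeeze_zero (fun n => norm_nonneg _)
      (g := fun n => 3/(2*π) * (volume (Δ \ U n)).toReal)
    · intro n
      rw [hpart n]
      have hdiff : E₁ (U n) - E₁ Δ = -(E₁ (Δ \ U n)) := by
        rw [hsplit n]; abel
      rw [hdiff, norm_neg]
      exact key _ (hm.diff (hUm n)) ((Set.diff_subset).trans hsub)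
    · simpa using (htenr.const_mul (3/(2*π)))
  · -- not norm-1
    intro hno
    have h1le : (1:ℝ) ≤ 2*π := by nlinarith [Real.pi_gt_three]
    have hsub1 : Set.Ico (0:ℝ) 1 ⊆ Set.Ico 0 (2*π) :=
      Set.Ico_subset_Ico le_rfl h1le
    have hm1 : MeasurableSet (Set.Ico (0:ℝ) 1) := measurableSet_Ico
    have hv1 : (volume (Set.Ico (0:ℝ) 1)).toReal = 1 := by
      simp [Real.volume_Ico]
    have hite := orthonormal_iff_ite.mp he
    have hne : E₁ (Set.Ico (0:ℝ) 1) ≠ 0 := by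
      intro h0
      have happ := congrArg (fun T : H →L[ℂ] H => ⟪e s, T (e s)⟫) h0
      rw [hE₁ _ hm1 hsub1] at happ
      simp only [ContinuousLinearMap.add_apply, ContinuousLinearMap.smul_apply,
        ContinuousLinearMap.one_apply, ketBra, ContinuousLinearMap.smulRight_apply,
        innerSL_apply_apply, inner_add_right, inner_smul_right, hite,
        ContinuousLinearMap.zero_apply, inner_zero_right] at happ
      simp only [if_true, if_neg hst, if_neg (Ne.symm hst), mul_one, mul_zero,
        zero_mul, add_zero, zero_add] at happ
      rw [hv1] at happ
      have : ((1 / (2*π) : ℝ) : ℂ) ≠ 0 := by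
        simp [Real.pi_ne_zero]
      exact this happ
    have h1 := hno _ hm1 hsub1 hne
    have hb := key _ hm1 hsub1
    rw [hv1, h1] at hb
    have hlt : 3 / (2*π) < 1 := by
      rw [div_lt_one hπ]; nlinarith [Real.pi_gt_three]
    linarith
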